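/- Let m be even and A, B sub-symmetric m-th order n-dimensional tensors. The SOCTEiCP (find nonzero x ∈ K, λ ∈ R with w := λ A x^{m-1} − B x^{m-1} ∈ K and ⟨x,w⟩ = 0) has a solution if and only if the nonlinear program: minimize f(x,y,w,λ) := ‖y − λ^{1/(m-1)} x‖² + (x^T w)² subject to w − A y^{m-1} + B x^{m-1} = 0, x ∈ K, w ∈ K, e^T x = 1, e^T y = λ^{1/(m-1)}, has a global minimum with optimal objective value zero. -/
import Mathlib


/-- Index type of `ℝ^{n₁} × ⋯ × ℝ^{n_r}` with blocks of sizes `n i + 1`;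
`⟨i, 0⟩` is the head index of block `i`. -/
abbrev BIdx {r : ℕ} (n : Fin r → ℕ) := (i : Fin r) × Fin (n i + 1)

/-- Membership in the product of second-order cones `K = K^{n₁} × ⋯ × K^{n_r}`. -/
def inK {r : ℕ} (n : Fin r → ℕ) (x : BIdx n → ℝ) : Prop :=
  ∀ i, Real.sqrt (∑ j : Fin (n i), x ⟨i, j.succ⟩ ^ 2) ≤ x ⟨i, 0⟩

/-- `eᵀx = ∑ᵢ x^i₀`, the sum of the head components of `x`. -/
def eT {r : ℕ} (n : Fin r → ℕ) (x : BIdx n → ℝ) : ℝ := ∑ i, x ⟨i, 0⟩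


/-- `A x^{m} = ∑ a_{i₁…i_m} x_{i₁} ⋯ x_{i_m}`. -/
def tpow {m : ℕ} {ι : Type*} [Fintype ι] (A : (Fin m → ι) → ℝ) (x : ι → ℝ) : ℝ :=
  ∑ f : Fin m → ι, A f * ∏ j, x (f j)

/-- `(A x^{m})_k = ∑_{i₂,…,i_{m+1}} a_{k i₂…i_{m+1}} x_{i₂} ⋯ x_{i_{m+1}}`. -/
def tmap {m : ℕ} {ι : Type*} [Fintype ι] (A : (Fin (m + 1) → ι) → ℝ) (x : ι → ℝ)
    (k : ι) : ℝ :=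
  ∑ f : Fin m → ι, A (Fin.cons k f) * ∏ j, x (f j)

/-- A tensor of order `m + 1` is sub-symmetric if, for each fixed first index,
it is invariant under permutations of its last `m` indices. -/
def SubSymm {m : ℕ} {ι : Type*} (A : (Fin (m + 1) → ι) → ℝ) : Prop :=
  ∀ (k : ι) (σ : Equiv.Perm (Fin m)) (f : Fin m → ι),
    A (Fin.cons k (f ∘ σ)) = A (Fin.cons k f)

/-- The real `k`-th root (for odd `k` this is the unique real `k`-th root). -/
noncomputable def oddRoot (k : ℕ) (t : ℝ) : ℝ := Real.sign t * |t| ^ ((1 : ℝ) / k)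

lemma tmap_smul {m : ℕ} {ι : Type*} [Fintype ι] (A : (Fin (m + 1) → ι) → ℝ)
    (c : ℝ) (x : ι → ℝ) (k : ι) :
    tmap A (fun j => c * x j) k = c ^ m * tmap A x k := by
  unfold tmap
  rw [Finset.mul_sum]
  refine Finset.sum_congr rfl fun f _ => ?_
  rw [Finset.prod_mul_distrib, Finset.prod_const]
  simp [Finset.card_univ]; ring

lemma oddRoot_pow {m : ℕ} (hm : Odd m) (t : ℝ) : (oddRoot m t) ^ m = t := by
  have hm0 : m ≠ 0 := by rintro rfl; simp at hm
  unfold oddRoot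
  rw [mul_pow, ← Real.rpow_natCast (|t| ^ ((1:ℝ)/m)) m, ← Real.rpow_mul (abs_nonneg t)]
  have : (1:ℝ)/m * m = 1 := by field_simp
  rw [this, Real.rpow_one]
  rcases lt_trichotomy t 0 with h | h | h
  · rw [Real.sign_of_neg h, hm.neg_one_pow, abs_of_neg h]; ring
  · simp [h, Real.sign_zero, zero_pow hm0]
  · rw [Real.sign_of_pos h, one_pow, abs_of_pos h, one_mul]

lemma inK_smul {r : ℕ} {n : Fin r → ℕ} {c : ℝ} (hc : 0 ≤ c) {x : BIdx n → ℝ}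
    (hx : inK n x) : inK n (fun k => c * x k) := by
  intro i
  have : ∑ j : Fin (n i), (c * x ⟨i, j.succ⟩) ^ 2 = c ^ 2 * ∑ j : Fin (n i), x ⟨i, j.succ⟩ ^ 2 := by
    rw [Finset.mul_sum]; refine Finset.sum_congr rfl fun j _ => by ring
  rw [this, Real.sqrt_mul (sq_nonneg c), Real.sqrt_sq hc]
  exact mul_le_mul_of_nonneg_left (hx i) hc

lemma eT_pos {r : ℕ} {n : Fin r → ℕ} {x : BIdx n → ℝ} (hx : inK n x) (hne : x ≠ 0) :
    0 < eT n x := by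
  have hhead : ∀ i, 0 ≤ x ⟨i, 0⟩ := fun i => le_trans (Real.sqrt_nonneg _) (hx i)
  rcases lt_or_eq_of_le (Finset.sum_nonneg fun i _ => hhead i : (0:ℝ) ≤ eT n x) with h | h0
  · exact h
  exfalso
  apply hne
  have hz : ∀ i ∈ Finset.univ, x ⟨i, 0⟩ = 0 :=
    (Finset.sum_eq_zero_iff_of_nonneg (fun i _ => hhead i)).mp h0.symm
  funext k
  obtain ⟨i, j⟩ := k
  have hsq : ∑ j : Fin (n i), x ⟨i, j.succ⟩ ^ 2 = 0 := by
    have h1 := hx i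
    rw [hz i (Finset.mem_univ i)] at h1
    have := Real.sqrt_eq_zero (Finset.sum_nonneg fun j _ => sq_nonneg _) |>.mp
      (le_antisymm h1 (Real.sqrt_nonneg _))
    exact this
  have htail : ∀ j ∈ Finset.univ, x ⟨i, Fin.succ j⟩ ^ 2 = 0 :=
    (Finset.sum_eq_zero_iff_of_nonneg (fun j _ => sq_nonneg _)).mp hsq
  induction j using Fin.cases with
  | zero => exact hz i (Finset.mem_univ i)
  | succ j => exact pow_eq_zero_iff (two_ne_zero) |>.mp (htail j (Finset.mem_univ j))

/-- For sub-symmetric tensors `A, B` of even order `m + 1` (i.e. `m` odd), the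
SOCTEiCP has a solution iff the nonlinear program
`min ‖y - λ^{1/m} x‖² + (xᵀw)²` s.t. `w - A y^m + B x^m = 0`, `x ∈ K`, `w ∈ K`,
`eᵀx = 1`, `eᵀy = λ^{1/m}` has a global minimum with objective value zero. -/
theorem subsymmetric_socteicp_iff_nlp {r : ℕ} (n : Fin r → ℕ) {m : ℕ} (hm : Odd m)
    (A B : (Fin (m + 1) → BIdx n) → ℝ) (hA : SubSymm A) (hB : SubSymm B) :
    (∃ (x : BIdx n → ℝ) (lam : ℝ), x ≠ 0 ∧ inK n x ∧
        inK n (fun k => lam * tmap A x k - tmap B x k) ∧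
        ∑ k, x k * (lam * tmap A x k - tmap B x k) = 0) ↔
      (∃ (x y w : BIdx n → ℝ) (lam : ℝ),
        ((∀ k, w k - tmap A y k + tmap B x k = 0) ∧ inK n x ∧ inK n w ∧
            eT n x = 1 ∧ eT n y = oddRoot m lam) ∧
          (∑ k, (y k - oddRoot m lam * x k) ^ 2) + (∑ k, x k * w k) ^ 2 = 0 ∧
          ∀ (x' y' w' : BIdx n → ℝ) (lam' : ℝ),
            ((∀ k, w' k - tmap A y' k + tmap B x' k = 0) ∧ inK n x' ∧ inK n w' ∧
                eT n x' = 1 ∧ eT n y' = oddRoot m lam') →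
              (∑ k, (y k - oddRoot m lam * x k) ^ 2) + (∑ k, x k * w k) ^ 2 ≤
                (∑ k, (y' k - oddRoot m lam' * x' k) ^ 2) + (∑ k, x' k * w' k) ^ 2) := by

  constructor
  · rintro ⟨x, lam, hne, hxK, hwK, hxw⟩
    have hs := eT_pos hxK hne
    set t := (eT n x)⁻¹ with ht
    have htpos : 0 < t := inv_pos.mpr hs
    have hts : t * eT n x = 1 := inv_mul_cancel₀ hs.ne'
    refine ⟨fun k => t * x k, fun k => (oddRoot m lam * t) * x k,
      fun k => t ^ m * (lam * tmap A x k - tmap B x k), lam, ⟨?_, ?_, ?_, ?_, ?_⟩, ?_, ?_⟩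
    · intro k
      rw [tmap_smul, tmap_smul, mul_pow, oddRoot_pow hm]
      ring
    · exact inK_smul htpos.le hxK
    · exact inK_smul (pow_nonneg htpos.le m) hwK
    · show ∑ i, t * x ⟨i, 0⟩ = 1
      rw [← Finset.mul_sum]; exact hts
    · show ∑ i, (oddRoot m lam * t) * x ⟨i, 0⟩ = oddRoot m lam
      rw [← Finset.mul_sum, mul_assoc]
      change oddRoot m lam * (t * eT n x) = oddRoot m lam
      rw [hts, mul_one]
    · have h1 : (∑ k, ((oddRoot m lam * t) * x k - oddRoot m lam * (t * x k)) ^ 2) = 0 :=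
        Finset.sum_eq_zero fun k _ => by ring
      have h2 : (∑ k, (t * x k) * (t ^ m * (lam * tmap A x k - tmap B x k))) =
          t ^ (m + 1) * ∑ k, x k * (lam * tmap A x k - tmap B x k) := by
        rw [Finset.mul_sum]; exact Finset.sum_congr rfl fun k _ => by ring
      rw [h1, h2, hxw]
      ring
    · intro x' y' w' lam' _
      have h1 : (∑ k, ((oddRoot m lam * t) * x k - oddRoot m lam * (t * x k)) ^ 2) = 0 :=
        Finset.sum_eq_zero fun k _ => by ring
      have h2 : (∑ k, (t * x k) * (t ^ m * (lam * tmap A x k - tmap B x k))) =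
          t ^ (m + 1) * ∑ k, x k * (lam * tmap A x k - tmap B x k) := by
        rw [Finset.mul_sum]; exact Finset.sum_congr rfl fun k _ => by ring
      rw [h1, h2, hxw]
      have : (0:ℝ) + (t ^ (m+1) * 0) ^ 2 = 0 := by ring
      rw [this]
      positivity
  · rintro ⟨x, y, w, lam, ⟨hfeas, hxK, hwK, hex, _⟩, hobj, -⟩
    have hS1 : (∑ k, (y k - oddRoot m lam * x k) ^ 2) = 0 := by
      have h1 : (0:ℝ) ≤ ∑ k, (y k - oddRoot m lam * x k) ^ 2 :=
        Finset.sum_nonneg fun k _ => sq_nonneg _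
      nlinarith [sq_nonneg (∑ k, x k * w k)]
    have hS2 : (∑ k, x k * w k) = 0 := by
      have h1 : (0:ℝ) ≤ ∑ k, (y k - oddRoot m lam * x k) ^ 2 :=
        Finset.sum_nonneg fun k _ => sq_nonneg _
      nlinarith [sq_nonneg (∑ k, x k * w k)]
    have hy : y = fun k => oddRoot m lam * x k := by
      funext k
      have := (Finset.sum_eq_zero_iff_of_nonneg (fun k _ => sq_nonneg
        (y k - oddRoot m lam * x k))).mp hS1 k (Finset.mem_univ k)
      have := pow_eq_zero_iff two_ne_zero |>.mp this
      linarith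
    have hw : ∀ k, lam * tmap A x k - tmap B x k = w k := by
      intro k
      have h := hfeas k
      rw [hy, tmap_smul, oddRoot_pow hm] at h
      linarith
    refine ⟨x, lam, ?_, hxK, ?_, ?_⟩
    · intro h0
      rw [h0] at hex
      simp [eT] at hex
    · intro i
      simpa only [hw] using hwK i
    · calc (∑ k, x k * (lam * tmap A x k - tmap B x k)) = ∑ k, x k * w k :=
            Finset.sum_congr rfl fun k _ => by rw [hw]
        _ = 0 := hS2
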